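/- For n×n matrices A and B over a commutative field, if K = dim ker A and M = dim ker B, then the homogeneous polynomial det(λA + μB) in variables λ, μ is divisible by λ^M · μ^K. -/

import Mathlib

open Matrix MvPolynomial

private lemma det_dvd_of_cols {R : Type*} [CommRing R] {n : ℕ}
    (M : Matrix (Fin n) (Fin n) R) (c : R) (s : Finset (Fin n))
    (h : ∀ i j, j ∈ s → c ∣ M i j) : c ^ s.card ∣ M.det := by
  rw [Matrix.det_apply']
  refine Finset.dvd_sum fun σ _ => Dvd.dvd.mul_left ?_ _
  have hc : c ^ s.card = ∏ _j ∈ s, c := by simp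
  rw [hc, ← Finset.prod_mul_prod_compl s (fun i => M (σ i) i)]
  exact Dvd.dvd.mul_right (Finset.prod_dvd_prod_of_dvd _ _ fun j hj => h _ _ hj) _

private lemma det_part {k : Type*} [Field k] {n : ℕ}
    (A B P : Matrix (Fin n) (Fin n) k) (sfin : Finset (Fin n))
    (hAP : ∀ i j, j ∈ sfin → (A * P) i j = 0) (hdetP : IsUnit P.det)
    (s t : MvPolynomial (Fin 2) k) :
    t ^ sfin.card ∣ Matrix.det (s • A.map C + t • B.map C) := by
  have hu : IsUnit (C P.det : MvPolynomial (Fin 2) k) := hdetP.map C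
  have key : (s • A.map C + t • B.map C) * P.map ⇑(C : k →+* MvPolynomial (Fin 2) k)
      = s • (A * P).map C + t • (B * P).map C := by
    rw [Matrix.add_mul, Matrix.smul_mul, Matrix.smul_mul, Matrix.map_mul, Matrix.map_mul]
  have hdvd : t ^ sfin.card ∣ Matrix.det (s • A.map C + t • B.map C) * C P.det := by
    rw [RingHom.map_det, ← Matrix.det_mul]
    have hmm : (C : k →+* MvPolynomial (Fin 2) k).mapMatrix P = P.map C := rfl
    rw [hmm, key]
    refine det_dvd_of_cols _ t sfin ?_
    intro i j hj
    have h0 : (A * P).map (C : k →+* MvPolynomial (Fin 2) k) i j = 0 := by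
      simp [Matrix.map_apply, hAP i j hj]
    simp only [Matrix.add_apply, Matrix.smul_apply, h0, Matrix.map_apply,
      smul_eq_mul, mul_zero, zero_add]
    exact Dvd.intro _ rfl
  exact (IsUnit.dvd_mul_right hu).mp hdvd

private lemma core_pow_dvd {k : Type*} [Field k] {n : ℕ}
    (A B : Matrix (Fin n) (Fin n) k) (K : ℕ)
    (hK : K = Module.finrank k (LinearMap.ker A.mulVecLin))
    (s t : MvPolynomial (Fin 2) k) :
    t ^ K ∣ Matrix.det (s • A.map C + t • B.map C) := by
  classical
  set W := LinearMap.ker A.mulVecLin with hWdef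
  obtain ⟨W', hcompl⟩ := Submodule.exists_isCompl W
  set L := Module.finrank k W' with hLdef
  have hn : K + L = n := by
    rw [hK, hLdef, Submodule.finrank_add_eq_of_isCompl hcompl, Module.finrank_fin_fun]
  let bW : Module.Basis (Fin K) k W := Module.finBasisOfFinrankEq k W hK.symm
  let bW' : Module.Basis (Fin L) k W' := Module.finBasis k W'
  let e : (W × W') ≃ₗ[k] (Fin n → k) := Submodule.prodEquivOfIsCompl W W' hcompl
  let b0 : Module.Basis (Fin K ⊕ Fin L) k (Fin n → k) := (bW.prod bW').map e
  let e2 : (Fin K ⊕ Fin L) ≃ Fin n := finSumFinEquiv.trans (finCongr hn)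
  let b : Module.Basis (Fin n) k (Fin n → k) := b0.reindex e2
  let P : Matrix (Fin n) (Fin n) k := (Pi.basisFun k (Fin n)).toMatrix ⇑b
  let sfin : Finset (Fin n) := Finset.univ.image (fun i : Fin K => e2 (Sum.inl i))
  have hinj : Function.Injective (fun i : Fin K => e2 (Sum.inl i)) :=
    fun a b hab => Sum.inl_injective (e2.injective hab)
  have hcard : sfin.card = K := by
    rw [show sfin = Finset.univ.image (fun i : Fin K => e2 (Sum.inl i)) from rfl,
      Finset.card_image_of_injective _ hinj, Finset.card_univ, Fintype.card_fin]
  have hmem : ∀ j ∈ sfin, (b j : Fin n → k) ∈ W := by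
    intro j hj
    obtain ⟨i, _, rfl⟩ := Finset.mem_image.mp hj
    show b (e2 (Sum.inl i)) ∈ W
    rw [show b (e2 (Sum.inl i)) = b0 (Sum.inl i) from by
      rw [Module.Basis.reindex_apply, Equiv.symm_apply_apply]]
    rw [show b0 (Sum.inl i) = e ((bW.prod bW') (Sum.inl i)) from
      Module.Basis.map_apply _ _ _]
    have hprod : (bW.prod bW') (Sum.inl i) = (bW i, 0) := by
      ext
      · simp [Module.Basis.prod_apply_inl_fst]
      · simp [Module.Basis.prod_apply_inl_snd]
    rw [hprod]
    show (↑(bW i) + ↑(0 : W') : Fin n → k) ∈ W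
    simp only [Submodule.coe_zero, add_zero]
    exact (bW i).2
  have hPcol : ∀ j i, P i j = b j i := by
    intro j i
    show (Pi.basisFun k (Fin n)).toMatrix ⇑b i j = b j i
    rw [Module.Basis.toMatrix_apply, Pi.basisFun_repr]
  have hAP : ∀ i j, j ∈ sfin → (A * P) i j = 0 := by
    intro i j hj
    have : (A * P) i j = (A *ᵥ (b j)) i := by
      simp only [Matrix.mul_apply, Matrix.mulVec, dotProduct]
      exact Finset.sum_congr rfl fun l _ => by rw [hPcol]
    rw [this]
    have := hmem j hj
    rw [hWdef, LinearMap.mem_ker] at this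
    have : A *ᵥ (b j) = 0 := by rwa [Matrix.mulVecLin_apply] at this
    rw [this]; rfl
  have : Invertible P := Module.Basis.invertibleToMatrix (Pi.basisFun k (Fin n)) b
  have hdetP : IsUnit P.det := Matrix.isUnit_det_of_invertible P
  exact hcard ▸ det_part A B P sfin hAP hdetP s t

private lemma primeX0 {k : Type*} [Field k] :
    Prime (X 0 : MvPolynomial (Fin 2) k) := by
  rw [← MulEquiv.prime_iff (MvPolynomial.finSuccEquiv k 1).toRingEquiv.toMulEquiv]
  show Prime ((MvPolynomial.finSuccEquiv k 1) (X 0))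
  rw [MvPolynomial.finSuccEquiv_X_zero]
  exact Polynomial.prime_X

private lemma X0_not_dvd_X1 {k : Type*} [Field k] :
    ¬ (X 0 : MvPolynomial (Fin 2) k) ∣ X 1 := by
  intro h
  obtain ⟨c, hc⟩ := h
  have := congrArg (MvPolynomial.eval (fun i : Fin 2 => if i = 0 then 0 else (1 : k))) hc
  simp at this

/-- If `K = dim ker A` and `M = dim ker B`, then `det (λ A + μ B)` is divisible by
`λ^M * μ^K`. -/
theorem lambda_mu_pow_dvd_det {k : Type*} [Field k] {n : ℕ}
    (A B : Matrix (Fin n) (Fin n) k)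
    (K M : ℕ) (hK : K = Module.finrank k (LinearMap.ker A.mulVecLin))
    (hM : M = Module.finrank k (LinearMap.ker B.mulVecLin)) :
    (X 0 : MvPolynomial (Fin 2) k) ^ M * (X 1) ^ K ∣
      Matrix.det ((X 0 : MvPolynomial (Fin 2) k) • A.map C + (X 1 : MvPolynomial (Fin 2) k) • B.map C) := by
  have h1 : (X 1 : MvPolynomial (Fin 2) k) ^ K ∣
      Matrix.det ((X 0 : MvPolynomial (Fin 2) k) • A.map C + (X 1 : MvPolynomial (Fin 2) k) • B.map C) :=
    core_pow_dvd A B K hK (X 0) (X 1)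
  have h0 : (X 0 : MvPolynomial (Fin 2) k) ^ M ∣
      Matrix.det ((X 0 : MvPolynomial (Fin 2) k) • A.map C + (X 1 : MvPolynomial (Fin 2) k) • B.map C) := by
    have := core_pow_dvd B A M hM (X 1) (X 0)
    rwa [add_comm] at this
  obtain ⟨d, hd⟩ := h1
  rw [hd] at h0 ⊢
  have hnd : ¬ (X 0 : MvPolynomial (Fin 2) k) ∣ (X 1 : MvPolynomial (Fin 2) k) ^ K := by
    intro h
    exact X0_not_dvd_X1 (primeX0.dvd_of_dvd_pow h)
  have := (primeX0 (k := k)).pow_dvd_of_dvd_mul_left M hnd h0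
  calc (X 0 : MvPolynomial (Fin 2) k) ^ M * (X 1) ^ K
      ∣ (X 1 : MvPolynomial (Fin 2) k) ^ K * ((X 0) ^ M) := by rw [mul_comm]
    _ ∣ (X 1 : MvPolynomial (Fin 2) k) ^ K * d := mul_dvd_mul_left _ this
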